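/- Let χ be a divisive weight vector (χ_{j−1} divides χ_j for 1 ≤ j ≤ n) and let 1 ≤ i ≤ n. Then g_i is injective on the open unit disc: if w, w' ∈ ℂ^i satisfy |w| < 1, |w'| < 1 and g_i(w) = g_i(w') in ℙ(χ), then w = w'. -/

import Mathlib

noncomputable section

open Complex

/-- The unit sphere `S^{2n+1} ⊆ ℂ^{n+1}`. -/
abbrev Sph (n : ℕ) := {z : Fin (n + 1) → ℂ // ∑ j, Complex.normSq (z j) = 1}

/-- The relation identifying points of `S^{2n+1}` in the same orbit of the weighted
circle `T(χ) = {(t^{χ₀},…,t^{χₙ}) : |t| = 1}`, acting coordinatewise. -/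
def WPrel (n : ℕ) (χ : Fin (n + 1) → ℕ) (z z' : Sph n) : Prop :=
  ∃ t : ℂ, ‖t‖ = 1 ∧ ∀ j, z'.1 j = t ^ (χ j) * z.1 j

/-- The weighted projective space `ℙ(χ) = S^{2n+1}/T(χ)` with the quotient topology. -/
abbrev WPS (n : ℕ) (χ : Fin (n + 1) → ℕ) := Quot (WPrel n χ)

/-- The vector `(0,…,0,√(1−|w|²),w₁,…,wᵢ) ∈ ℂ^{n+1}` (the square root in coordinate
`n − i`). -/
def zvec (n i : ℕ) (hi : i ≤ n) (w : Fin i → ℂ) : Fin (n + 1) → ℂ := fun j =>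
  Fin.append
    (Fin.append (fun _ : Fin (n - i) => (0 : ℂ))
      (fun _ : Fin 1 => ((Real.sqrt (1 - ∑ k, Complex.normSq (w k)) : ℝ) : ℂ)))
    w (Fin.cast (by omega) j)

lemma zvec_mem (n i : ℕ) (hi : i ≤ n) (w : Fin i → ℂ)
    (hw : ∑ k, Complex.normSq (w k) ≤ 1) :
    ∑ j, Complex.normSq (zvec n i hi w j) = 1 := by
  classical
  set c : ℂ := ((Real.sqrt (1 - ∑ k, Complex.normSq (w k)) : ℝ) : ℂ) with hc
  set F : Fin (n - i + 1 + i) → ℂ :=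
    Fin.append (Fin.append (fun _ : Fin (n - i) => (0 : ℂ)) (fun _ : Fin 1 => c)) w with hF
  have key : ∑ j : Fin (n + 1), Complex.normSq (zvec n i hi w j)
      = ∑ j : Fin (n - i + 1 + i), Complex.normSq (F j) :=
    Fintype.sum_equiv (finCongr (by omega)) _ _ (fun j => rfl)
  rw [key, Fin.sum_univ_add]
  have h1 : ∑ j : Fin (n - i + 1), Complex.normSq (F (Fin.castAdd i j))
      = 1 - ∑ k, Complex.normSq (w k) := by
    have : ∀ j : Fin (n - i + 1), F (Fin.castAdd i j)
        = Fin.append (fun _ : Fin (n - i) => (0 : ℂ)) (fun _ : Fin 1 => c) j := fun j => by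
      rw [hF, Fin.append_left]
    simp only [this]
    rw [Fin.sum_univ_add]
    simp only [Fin.append_left, Fin.append_right]
    have h0 : 0 ≤ 1 - ∑ k, Complex.normSq (w k) := by linarith
    simp [hc, Complex.normSq_ofReal, Real.mul_self_sqrt h0]
  have h2 : ∀ j : Fin i, F (Fin.natAdd (n - i + 1) j) = w j := fun j => by
    rw [hF, Fin.append_right]
  simp only [h2]
  rw [h1]
  ring

/-- The characteristic map `gᵢ : D^{2i} → ℙ(χ)`,
`gᵢ(w) = [0,…,0,√(1−|w|²),w₁,…,wᵢ]`, defined on the closed unit disc. -/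
def gmap (n : ℕ) (χ : Fin (n + 1) → ℕ) (i : ℕ) (hi : i ≤ n)
    (w : {w : Fin i → ℂ // ∑ k, Complex.normSq (w k) ≤ 1}) : WPS n χ :=
  Quot.mk _ ⟨zvec n i hi w.1, zvec_mem n i hi w.1 w.2⟩



lemma zvec_mid (n i : ℕ) (hi : i ≤ n) (w : Fin i → ℂ) :
    zvec n i hi w ⟨n - i, by omega⟩
      = ((Real.sqrt (1 - ∑ k, Complex.normSq (w k)) : ℝ) : ℂ) := by
  have h1 : (Fin.cast (by omega : n + 1 = n - i + 1 + i) ⟨n - i, by omega⟩ :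
      Fin (n - i + 1 + i)) = Fin.castAdd i (Fin.natAdd (n - i) (0 : Fin 1)) := by
    ext; simp
  simp only [zvec, h1, Fin.append_left, Fin.append_right]

lemma zvec_right (n i : ℕ) (hi : i ≤ n) (w : Fin i → ℂ) (k : Fin i) :
    zvec n i hi w ⟨n - i + 1 + k.1, by omega⟩ = w k := by
  have h1 : (Fin.cast (by omega : n + 1 = n - i + 1 + i) ⟨n - i + 1 + k.1, by omega⟩ :
      Fin (n - i + 1 + i)) = Fin.natAdd (n - i + 1) k := by
    ext; simp
  simp only [zvec, h1, Fin.append_right]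

lemma WPrel_equiv (n : ℕ) (χ : Fin (n + 1) → ℕ) : Equivalence (WPrel n χ) := by
  constructor
  · intro z
    exact ⟨1, by simp, fun j => by simp⟩
  · rintro z z' ⟨t, ht, h⟩
    have ht0 : t ≠ 0 := by
      intro h0; rw [h0] at ht; simp at ht
    refine ⟨t⁻¹, by simp [map_inv₀, ht], fun j => ?_⟩
    rw [h j]
    rw [← mul_assoc, ← mul_pow, inv_mul_cancel₀ ht0, one_pow, one_mul]
  · rintro x y z ⟨t, ht, h⟩ ⟨s, hs, h'⟩
    refine ⟨s * t, by simp [map_mul, ht, hs], fun j => ?_⟩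
    rw [h' j, h j, mul_pow]
    ring

lemma chain_dvd (n : ℕ) (χ : Fin (n + 1) → ℕ)
    (hdiv : ∀ j : Fin n, χ j.castSucc ∣ χ j.succ) :
    ∀ q : ℕ, ∀ (hq : q ≤ n), ∀ p : ℕ, ∀ (hp : p ≤ q),
      χ ⟨p, by omega⟩ ∣ χ ⟨q, by omega⟩ := by
  intro q
  induction q with
  | zero =>
      intro _ p hp
      have : p = 0 := by omega
      subst this
      exact dvd_refl _
  | succ q ih =>
      intro hq p hp
      rcases eq_or_lt_of_le hp with h | h
      · subst h; exact dvd_refl _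
      · have hpq : p ≤ q := by omega
        have h1 : χ ⟨p, by omega⟩ ∣ χ ⟨q, by omega⟩ := ih (by omega) p hpq
        have h2 : χ ⟨q, by omega⟩ ∣ χ ⟨q + 1, by omega⟩ := by
          have := hdiv ⟨q, by omega⟩
          simpa [Fin.castSucc, Fin.succ] using this
        exact h1.trans h2


/-- For a divisive weight vector `χ` and `1 ≤ i ≤ n`, the characteristic map `gᵢ` is
injective on the open unit disc: if `|w| < 1`, `|w'| < 1` and `gᵢ(w) = gᵢ(w')` in
`ℙ(χ)`, then `w = w'`. -/
theorem gmap_injective_on_open_disc (n : ℕ) (χ : Fin (n + 1) → ℕ) (hpos : ∀ j, 0 < χ j)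
    (hdiv : ∀ j : Fin n, χ j.castSucc ∣ χ j.succ)
    (i : ℕ) (hi1 : 1 ≤ i) (hi : i ≤ n) (w w' : Fin i → ℂ)
    (hw : ∑ k, Complex.normSq (w k) < 1) (hw' : ∑ k, Complex.normSq (w' k) < 1)
    (heq : gmap n χ i hi ⟨w, hw.le⟩ = gmap n χ i hi ⟨w', hw'.le⟩) :
    w = w' := by
  classical
  -- extract the relation
  have hper : WPrel n χ ⟨zvec n i hi w, zvec_mem n i hi w hw.le⟩
      ⟨zvec n i hi w', zvec_mem n i hi w' hw'.le⟩ := by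
    have h := Quot.eq.mp heq
    exact ((WPrel_equiv n χ).eqvGen_iff).mp h
  obtain ⟨t, ht, hco⟩ := hper
  set a : ℝ := Real.sqrt (1 - ∑ k, Complex.normSq (w k)) with ha
  set a' : ℝ := Real.sqrt (1 - ∑ k, Complex.normSq (w' k)) with ha'
  have hapos : 0 < a := Real.sqrt_pos.mpr (by linarith)
  have ha'pos : 0 < a' := Real.sqrt_pos.mpr (by linarith)
  set j0 : Fin (n + 1) := ⟨n - i, by omega⟩ with hj0
  have hmid := hco j0
  rw [show (⟨zvec n i hi w, zvec_mem n i hi w hw.le⟩ : Sph n).1 = zvec n i hi w from rfl] at hmid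
  rw [show (⟨zvec n i hi w', zvec_mem n i hi w' hw'.le⟩ : Sph n).1 = zvec n i hi w' from rfl] at hmid
  rw [zvec_mid, zvec_mid] at hmid
  -- hmid : (a' : ℂ) = t ^ χ j0 * (a : ℂ)
  have hane : (a : ℂ) ≠ 0 := by
    simpa using ne_of_gt hapos
  have htpow : t ^ χ j0 = ((a' / a : ℝ) : ℂ) := by
    push_cast
    field_simp
    linear_combination -hmid
  have habs : ‖t ^ χ j0‖ = 1 := by
    rw [norm_pow, ht, one_pow]
  have hratio : a' / a = 1 := by
    have : ‖((a' / a : ℝ) : ℂ)‖ = 1 := by rw [← htpow]; exact habs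
    rw [Complex.norm_real, Real.norm_eq_abs, abs_of_pos (div_pos ha'pos hapos)] at this
    exact this
  have htone : t ^ χ j0 = 1 := by rw [htpow, hratio]; simp
  funext k
  have hk := hco ⟨n - i + 1 + k.1, by omega⟩
  rw [show (⟨zvec n i hi w, zvec_mem n i hi w hw.le⟩ : Sph n).1 = zvec n i hi w from rfl] at hk
  rw [show (⟨zvec n i hi w', zvec_mem n i hi w' hw'.le⟩ : Sph n).1 = zvec n i hi w' from rfl] at hk
  rw [zvec_right, zvec_right] at hk
  have hdvd : χ j0 ∣ χ ⟨n - i + 1 + k.1, by omega⟩ :=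
    chain_dvd n χ hdiv (n - i + 1 + k.1) (by omega) (n - i) (by omega)
  obtain ⟨m, hm⟩ := hdvd
  have : t ^ χ (⟨n - i + 1 + k.1, by omega⟩ : Fin (n + 1)) = 1 := by
    rw [hm, pow_mul, htone, one_pow]
  rw [this, one_mul] at hk
  exact hk.symm
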